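/- Let F be a number field of degree d over ℚ with ring of integers O, let n ≥ 1, and let B be a compact subset of F_∞^n. Then there exists a constant C > 0, depending only on F, n and B, such that for every real number r, every nonzero ideal I of O, and every subset Y ⊆ (O/I)^n, the number of points a ∈ O^n such that σ(a) ∈ r·B and the componentwise reduction of a modulo I lies in Y is at most C·(|r|^{nd}/N(I)^n + 1)·#Y, where |r| denotes the usual absolute value of r. -/

import Mathlib

open NumberField
open scoped Pointwise

lemma aux_ncard_biUnion_le {α β : Type*} (t : Finset β) (f : β → Set α) :
    (⋃ b ∈ t, f b).ncard ≤ ∑ b ∈ t, (f b).ncard := by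
  classical
  induction t using Finset.induction with
  | empty => simp
  | @insert _ _ hnot ih =>
      rw [Finset.set_biUnion_insert, Finset.sum_insert hnot]
      exact (Set.ncard_union_le _ _).trans (by omega)

lemma aux_packing_bound {E : Type*} [NormedAddCommGroup E] [NormedSpace ℝ E]
    [FiniteDimensional ℝ E] :
    ∃ c : ℝ, 0 < c ∧ ∀ (M δ : ℝ), 0 ≤ M → 0 < δ → ∀ S : Set E,
      (∀ x ∈ S, ‖x‖ ≤ M) → (S.Pairwise fun x y => δ ≤ ‖x - y‖) →
      S.Finite ∧ (S.ncard : ℝ) ≤ c * ((M / δ) ^ (Module.finrank ℝ E) + 1) := by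
  classical
  set D := Module.finrank ℝ E with hD
  let e : E ≃L[ℝ] (Fin D → ℝ) := (Module.finBasis ℝ E).equivFun.toContinuousLinearEquiv
  set K₁ := ‖(e : E →L[ℝ] (Fin D → ℝ))‖ with hK₁
  set K₂ := ‖(e.symm : (Fin D → ℝ) →L[ℝ] E)‖ with hK₂
  have hK₁0 : 0 ≤ K₁ := norm_nonneg _
  have hK₂0 : 0 ≤ K₂ := norm_nonneg _
  refine ⟨(2 * K₁ * (K₂ + 1) + 3) ^ D, by positivity, ?_⟩
  intro M δ hM hδ S hSM hsep
  set s : ℝ := δ / (K₂ + 1) with hs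
  have hs0 : 0 < s := by positivity
  set f : E → (Fin D → ℤ) := fun x i => ⌊e x i / s⌋ with hf
  have hinj : Set.InjOn f S := by
    intro x hx y hy hxy
    by_contra hne
    have hsep' : δ ≤ ‖x - y‖ := hsep hx hy hne
    have h2 : ‖e x - e y‖ < s := by
      rw [pi_norm_lt_iff hs0]
      intro i
      have h1 : |e x i / s - e y i / s| < 1 :=
        Int.abs_sub_lt_one_of_floor_eq_floor (congrFun hxy i)
      have h1' : |e x i - e y i| / s < 1 := by
        rwa [← sub_div, abs_div, abs_of_pos hs0] at h1
      have := (div_lt_one hs0).mp h1'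
      simpa [Real.norm_eq_abs] using this
    have h3 : ‖x - y‖ ≤ K₂ * ‖e x - e y‖ := by
      have hxy2 : x - y = e.symm (e x - e y) := by
        simp [map_sub]
      rw [hxy2]
      exact (e.symm : (Fin D → ℝ) →L[ℝ] E).le_opNorm _
    have h4 : K₂ * s + s = δ := by
      rw [hs]; field_simp
    have h5 : δ ≤ K₂ * s :=
      hsep'.trans (h3.trans (mul_le_mul_of_nonneg_left h2.le hK₂0))
    linarith
  set T : ℤ := ⌈K₁ * M / s⌉ with hT
  have hTle : (T : ℝ) ≤ K₁ * M / s + 1 := (Int.ceil_lt_add_one _).le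
  have hT0 : 0 ≤ T := Int.ceil_nonneg (by positivity)
  set box : Finset (Fin D → ℤ) := Fintype.piFinset fun _ => Finset.Icc (-T) T with hbox
  have himg : ∀ x ∈ S, f x ∈ box := by
    intro x hx
    rw [hbox, Fintype.mem_piFinset]
    intro i
    have h5 : |e x i| ≤ K₁ * M := by
      have h6 : ‖(e x) i‖ ≤ ‖e x‖ := norm_le_pi_norm (e x) i
      have h7 : ‖e x‖ ≤ K₁ * ‖x‖ := (e : E →L[ℝ] (Fin D → ℝ)).le_opNorm x
      have h8 : K₁ * ‖x‖ ≤ K₁ * M := mul_le_mul_of_nonneg_left (hSM x hx) hK₁0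
      rw [Real.norm_eq_abs] at h6
      linarith
    rw [Finset.mem_Icc]
    constructor
    · rw [Int.le_floor]
      push_cast
      rw [neg_le, ← neg_div]
      calc -(e x i) / s ≤ K₁ * M / s := by gcongr <;> linarith [abs_le.mp h5, hs0]
        _ ≤ (T : ℝ) := Int.le_ceil _
    · have : (⌊e x i / s⌋ : ℝ) ≤ (T : ℝ) := by
        calc (⌊e x i / s⌋ : ℝ) ≤ e x i / s := Int.floor_le _
          _ ≤ K₁ * M / s := by gcongr <;> linarith [abs_le.mp h5, hs0]
          _ ≤ (T : ℝ) := Int.le_ceil _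
      exact_mod_cast this
  have himgsub : f '' S ⊆ ↑box := by
    rintro _ ⟨x, hx, rfl⟩; exact himg x hx
  have hfin : S.Finite :=
    Set.Finite.of_finite_image (Set.Finite.subset box.finite_toSet himgsub) hinj
  refine ⟨hfin, ?_⟩
  have hcard1 : S.ncard = (f '' S).ncard := (Set.ncard_image_of_injOn hinj).symm
  have hcard2 : (f '' S).ncard ≤ box.card := by
    have := Set.ncard_le_ncard himgsub box.finite_toSet
    rwa [Set.ncard_coe_finset] at this
  have hboxcard : box.card = (Finset.Icc (-T) T).card ^ D := by
    rw [hbox, Fintype.card_piFinset]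
    simp
  have hIcc : ((Finset.Icc (-T) T).card : ℝ) ≤ 2 * (K₁ * M / s) + 3 := by
    rw [Int.card_Icc]
    have h9 : (0:ℤ) ≤ T + 1 - -T := by omega
    rw [show ((((T + 1 - -T).toNat : ℕ)) : ℝ) = ((T + 1 - -T : ℤ) : ℝ) by
      rw [← Int.cast_natCast, Int.toNat_of_nonneg h9]]
    push_cast
    linarith
  have hcard0 : S.ncard ≤ box.card := by rw [hcard1]; exact hcard2
  have hcard3 : (S.ncard : ℝ) ≤ (2 * (K₁ * M / s) + 3) ^ D := by
    calc (S.ncard : ℝ) ≤ (box.card : ℝ) := Nat.cast_le.mpr hcard0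
      _ = ((Finset.Icc (-T) T).card : ℝ) ^ D := by rw [hboxcard]; push_cast; ring
      _ ≤ (2 * (K₁ * M / s) + 3) ^ D :=
          pow_le_pow_left₀ (Nat.cast_nonneg _) hIcc D
  have hsval : 2 * (K₁ * M / s) = (2 * K₁ * (K₂ + 1)) * (M / δ) := by
    rw [hs]; field_simp
  rw [hsval] at hcard3
  set u : ℝ := M / δ with hu
  have hu0 : 0 ≤ u := by positivity
  set c' : ℝ := 2 * K₁ * (K₂ + 1) with hc'
  have hc'0 : 0 ≤ c' := by positivity
  refine hcard3.trans ?_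
  clear_value K₁ K₂ s f T box u c'
  clear hcard3 hcard1 hcard2 hboxcard hIcc himg himgsub hinj hsep hSM
  have hnn : (0:ℝ) ≤ c' * u + 3 := by
    have := mul_nonneg hc'0 hu0; linarith
  have hnn2 : (0:ℝ) ≤ c' + 3 := by linarith
  rcases le_total u 1 with h | h
  · have hb : c' * u + 3 ≤ c' + 3 := by
      have := mul_le_of_le_one_right hc'0 h; linarith
    calc (c' * u + 3) ^ D ≤ (c' + 3) ^ D := pow_le_pow_left₀ hnn hb D
      _ ≤ (c' + 3) ^ D * (u ^ D + 1) :=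
          le_mul_of_one_le_right (pow_nonneg hnn2 D) (by linarith [pow_nonneg hu0 D])
  · have hb : c' * u + 3 ≤ (c' + 3) * u := by
      have h3u : (c' + 3) * u = c' * u + 3 * u := by ring
      linarith
    calc (c' * u + 3) ^ D ≤ ((c' + 3) * u) ^ D := pow_le_pow_left₀ hnn hb D
      _ = (c' + 3) ^ D * u ^ D := mul_pow _ _ _
      _ ≤ (c' + 3) ^ D * (u ^ D + 1) :=
          mul_le_mul_of_nonneg_left (by linarith [pow_nonneg hu0 D]) (pow_nonneg hnn2 D)


open scoped Classical in
lemma aux_sep_bound (F : Type*) [Field F] [NumberField F]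
    (I : Ideal (𝓞 F)) (hI : I ≠ ⊥) {x : 𝓞 F} (hx : x ∈ I) (hx0 : x ≠ 0) :
    (Ideal.absNorm I : ℝ) ^ ((Module.finrank ℚ F : ℝ)⁻¹) ≤
      ‖mixedEmbedding F (algebraMap (𝓞 F) F x)‖ := by
  have hd0 : 0 < Module.finrank ℚ F := Module.finrank_pos
  set d := Module.finrank ℚ F with hd
  set z := mixedEmbedding F (algebraMap (𝓞 F) F x) with hz
  have h1 : (Ideal.absNorm I : ℤ) ∣ Algebra.norm ℤ x := Ideal.absNorm_dvd_norm_of_mem hx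
  have h2 : Algebra.norm ℤ x ≠ 0 := by
    intro h
    have h2' : (Algebra.norm ℚ (algebraMap (𝓞 F) F x)) = 0 := by
      rw [← Algebra.coe_norm_int, h]; simp
    rw [Algebra.norm_eq_zero_iff] at h2'
    exact hx0 (RingOfIntegers.coe_eq_zero_iff.mp h2')
  have h3 : (Ideal.absNorm I : ℤ) ≤ |Algebra.norm ℤ x| :=
    Int.le_of_dvd (abs_pos.mpr h2) ((dvd_abs _ _).mpr h1)
  have h4 : (Ideal.absNorm I : ℝ) ≤ mixedEmbedding.norm z := by
    rw [hz, mixedEmbedding.norm_eq_norm, ← Algebra.coe_norm_int]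
    have : ((Ideal.absNorm I : ℤ) : ℝ) ≤ (|Algebra.norm ℤ x| : ℝ) := by exact_mod_cast h3
    push_cast at this ⊢
    convert this using 2
  have h5 : mixedEmbedding.norm z ≤ ‖z‖ ^ d := by
    rw [mixedEmbedding.norm_apply]
    have hle : ∀ w : InfinitePlace F, mixedEmbedding.normAtPlace w z ≤ ‖z‖ := by
      intro w
      rw [mixedEmbedding.norm_eq_sup'_normAtPlace z]
      exact Finset.le_sup' (f := fun w => mixedEmbedding.normAtPlace w z) (Finset.mem_univ w)
    calc ∏ w, mixedEmbedding.normAtPlace w z ^ w.mult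
        ≤ ∏ w : InfinitePlace F, ‖z‖ ^ w.mult :=
          Finset.prod_le_prod (fun w _ => pow_nonneg (mixedEmbedding.normAtPlace_nonneg w z) _)
            (fun w _ => pow_le_pow_left₀ (mixedEmbedding.normAtPlace_nonneg w z) (hle w) _)
      _ = ‖z‖ ^ d := by
          rw [Finset.prod_pow_eq_pow_sum, InfinitePlace.sum_mult_eq]
  have h6 : (Ideal.absNorm I : ℝ) ≤ ‖z‖ ^ d := h4.trans h5
  have h7 := Real.rpow_le_rpow (by positivity) h6 (by positivity : (0:ℝ) ≤ ((d:ℝ))⁻¹)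
  rwa [← Real.rpow_natCast ‖z‖ d, ← Real.rpow_mul (norm_nonneg z),
    mul_inv_cancel₀ (by exact_mod_cast hd0.ne'), Real.rpow_one] at h7

/-- (Counting lattice points with congruence conditions.)
Let `F` be a number field of degree `d` with ring of integers `O`, `n ≥ 1`, and `B` a compact
subset of `F_∞ⁿ` (here `F_∞` is realized as the mixed space of `F` and `σ` is the canonical
(mixed) embedding). Then there is a constant `C > 0`, depending only on `F`, `n` and `B`, such
that for every `r ∈ ℝ`, every nonzero ideal `I` of `O` and every `Y ⊆ (O/I)ⁿ`, the number of
`a ∈ Oⁿ` with `σ(a) ∈ r·B` and `a mod I ∈ Y` is at most `C·(|r|^{nd}/N(I)ⁿ + 1)·#Y`. -/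
theorem count_lattice_points_with_congruence
    (F : Type*) [Field F] [NumberField F]
    (n : ℕ) (hn : 1 ≤ n)
    (B : Set (Fin n → mixedEmbedding.mixedSpace F)) (hB : IsCompact B) :
    ∃ C : ℝ, 0 < C ∧
      ∀ (r : ℝ) (I : Ideal (𝓞 F)) (_ : I ≠ ⊥) (Y : Set (Fin n → (𝓞 F) ⧸ I)),
        letI S : Set (Fin n → 𝓞 F) :=
          {a | (fun i => mixedEmbedding F (algebraMap (𝓞 F) F (a i))) ∈ r • B ∧
               (fun i => Ideal.Quotient.mk I (a i)) ∈ Y}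
        S.Finite ∧
        (S.ncard : ℝ) ≤
          C * (|r| ^ (n * Module.finrank ℚ F) / (Ideal.absNorm I : ℝ) ^ n + 1) *
            (Y.ncard : ℝ) := by
  classical
  obtain ⟨c, hc, hcount⟩ := aux_packing_bound (E := Fin n → mixedEmbedding.mixedSpace F)
  have hd0 : 0 < Module.finrank ℚ F := Module.finrank_pos
  set d := Module.finrank ℚ F with hd
  have hDE : Module.finrank ℝ (Fin n → mixedEmbedding.mixedSpace F) = n * d := by
    rw [Module.finrank_pi_fintype ℝ, Finset.sum_const, Finset.card_univ, Fintype.card_fin,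
      smul_eq_mul, mixedEmbedding.finrank, hd]
  rw [hDE] at hcount
  obtain ⟨R, hRB⟩ := isBounded_iff_forall_norm_le.mp hB.isBounded
  set R' := max R 0 with hR'def
  have hR' : ∀ b ∈ B, ‖b‖ ≤ R' := fun b hb => (hRB b hb).trans (le_max_left _ _)
  have hR'0 : 0 ≤ R' := le_max_right _ _
  refine ⟨c * max (R' ^ (n * d)) 1, by positivity, ?_⟩
  intro r I hI Y
  haveI : Fintype ((𝓞 F) ⧸ I) := @Fintype.ofFinite _ (Ideal.finiteQuotientOfFreeOfNeBot I hI)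
  haveI hfq : Finite ((𝓞 F) ⧸ I) := Finite.of_fintype _
  haveI hfqn : Finite (Fin n → (𝓞 F) ⧸ I) := Pi.finite
  have hN0 : 0 < (Ideal.absNorm I : ℝ) := by
    have h1 : Ideal.absNorm I ≠ 0 := by
      rw [Ideal.absNorm_ne_zero_iff]
      exact Finite.of_fintype _
    exact_mod_cast Nat.pos_of_ne_zero h1
  set N : ℝ := (Ideal.absNorm I : ℝ) with hNdef
  set δ : ℝ := N ^ ((d : ℝ)⁻¹) with hδdef
  have hδ0 : 0 < δ := Real.rpow_pos_of_pos hN0 _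
  have hδpow : δ ^ (n * d) = N ^ n := by
    rw [hδdef, ← Real.rpow_natCast (N ^ ((d:ℝ)⁻¹)) (n * d), ← Real.rpow_mul hN0.le,
      ← Real.rpow_natCast N n]
    congr 1
    push_cast
    field_simp
  set σv : (Fin n → 𝓞 F) → (Fin n → mixedEmbedding.mixedSpace F) :=
    fun a i => mixedEmbedding F (algebraMap (𝓞 F) F (a i)) with hσv
  have hσvinj : Function.Injective σv := by
    intro a b hab
    funext i
    exact RingOfIntegers.coe_injective (mixedEmbedding_injective F (congrFun hab i))
  set g : (Fin n → 𝓞 F) → (Fin n → (𝓞 F) ⧸ I) := fun a i => Ideal.Quotient.mk I (a i) with hg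
  set S : Set (Fin n → 𝓞 F) := {a | σv a ∈ r • B ∧ g a ∈ Y} with hS
  have hnormS : ∀ a ∈ S, ‖σv a‖ ≤ |r| * R' := by
    rintro a ⟨⟨b, hb, hba⟩, -⟩
    rw [← hba, norm_smul, Real.norm_eq_abs]
    exact mul_le_mul_of_nonneg_left (hR' b hb) (abs_nonneg r)
  set Sy : (Fin n → (𝓞 F) ⧸ I) → Set (Fin n → 𝓞 F) := fun y => {a | a ∈ S ∧ g a = y} with hSy
  set q : ℝ := |r| ^ (n * d) / N ^ n with hq
  have hq0 : 0 ≤ q := by positivity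
  have hkey : ∀ y, (Sy y).Finite ∧
      ((Sy y).ncard : ℝ) ≤ c * max (R' ^ (n * d)) 1 * (q + 1) := by
    intro y
    have hbound : ∀ x ∈ σv '' (Sy y), ‖x‖ ≤ |r| * R' := by
      rintro _ ⟨a, ha, rfl⟩
      exact hnormS a ha.1
    have hsep : (σv '' (Sy y)).Pairwise fun x z => δ ≤ ‖x - z‖ := by
      rintro _ ⟨a, ha, rfl⟩ _ ⟨b, hb, rfl⟩ hne
      have hab : a ≠ b := fun h => hne (by rw [h])
      obtain ⟨i, hi⟩ : ∃ i, a i ≠ b i := by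
        by_contra h
        push_neg at h
        exact hab (funext h)
      have hmem : a i - b i ∈ I := by
        have : Ideal.Quotient.mk I (a i) = Ideal.Quotient.mk I (b i) := by
          have := ha.2.trans hb.2.symm
          exact congrFun this i
        exact Ideal.Quotient.eq.mp this
      have hne0 : a i - b i ≠ 0 := sub_ne_zero.mpr hi
      have h1 := aux_sep_bound F I hI hmem hne0
      have h2 : (σv a - σv b) i = mixedEmbedding F (algebraMap (𝓞 F) F (a i - b i)) := by
        simp [hσv, map_sub]
      calc δ ≤ ‖mixedEmbedding F (algebraMap (𝓞 F) F (a i - b i))‖ := h1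
        _ = ‖(σv a - σv b) i‖ := by rw [h2]
        _ ≤ ‖σv a - σv b‖ := norm_le_pi_norm _ i
    obtain ⟨hfin, hle⟩ := hcount (|r| * R') δ (by positivity) hδ0 (σv '' (Sy y)) hbound hsep
    have hfin' : (Sy y).Finite :=
      Set.Finite.of_finite_image hfin (hσvinj.injOn)
    refine ⟨hfin', ?_⟩
    rw [Set.ncard_image_of_injective _ hσvinj] at hle
    refine hle.trans ?_
    have heq : (|r| * R' / δ) ^ (n * d) = R' ^ (n * d) * q := by
      rw [div_pow, mul_pow, hδpow, hq]
      ring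
    rw [heq]
    have h3 : R' ^ (n * d) * q ≤ max (R' ^ (n * d)) 1 * q :=
      mul_le_mul_of_nonneg_right (le_max_left _ _) hq0
    have h4 : (1:ℝ) ≤ max (R' ^ (n * d)) 1 := le_max_right _ _
    nlinarith [hc]
  have hYfin : Y.Finite := Set.Finite.subset (Set.finite_univ (α := Fin n → (𝓞 F) ⧸ I)) (Set.subset_univ Y)
  have hSsub : S ⊆ ⋃ y ∈ hYfin.toFinset, Sy y := by
    intro a ha
    exact Set.mem_biUnion (hYfin.mem_toFinset.mpr ha.2) ⟨ha, rfl⟩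
  have hUfin : (⋃ y ∈ hYfin.toFinset, Sy y).Finite :=
    Set.Finite.biUnion (hYfin.toFinset.finite_toSet) (fun y _ => (hkey y).1)
  have hSfin : S.Finite := hUfin.subset hSsub
  refine ⟨hSfin, ?_⟩
  have hstep1 : (S.ncard : ℝ) ≤ ∑ y ∈ hYfin.toFinset, ((Sy y).ncard : ℝ) := by
    have h5 : S.ncard ≤ (⋃ y ∈ hYfin.toFinset, Sy y).ncard :=
      Set.ncard_le_ncard hSsub hUfin
    have h6 := aux_ncard_biUnion_le hYfin.toFinset Sy
    have : (S.ncard : ℝ) ≤ ((∑ y ∈ hYfin.toFinset, (Sy y).ncard : ℕ) : ℝ) := by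
      exact_mod_cast h5.trans h6
    rwa [Nat.cast_sum] at this
  have hstep2 : ∑ y ∈ hYfin.toFinset, ((Sy y).ncard : ℝ) ≤
      (Y.ncard : ℝ) * (c * max (R' ^ (n * d)) 1 * (q + 1)) := by
    calc ∑ y ∈ hYfin.toFinset, ((Sy y).ncard : ℝ)
        ≤ ∑ _y ∈ hYfin.toFinset, (c * max (R' ^ (n * d)) 1 * (q + 1)) :=
          Finset.sum_le_sum fun y _ => (hkey y).2
      _ = (hYfin.toFinset.card : ℝ) * (c * max (R' ^ (n * d)) 1 * (q + 1)) := by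
          rw [Finset.sum_const, nsmul_eq_mul]
      _ = (Y.ncard : ℝ) * (c * max (R' ^ (n * d)) 1 * (q + 1)) := by
          rw [Set.ncard_eq_toFinset_card Y hYfin]
  calc (S.ncard : ℝ) ≤ (Y.ncard : ℝ) * (c * max (R' ^ (n * d)) 1 * (q + 1)) :=
        hstep1.trans hstep2
    _ = c * max (R' ^ (n * d)) 1 * (q + 1) * (Y.ncard : ℝ) := by ring
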